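/- For every α, β with 0 < α < 1 and 0 < β < 1/3, and every Sierpinski set S ⊆ ℝ, Bob has a winning strategy in Schmidt's (α,β)-game with target S. -/

import Mathlib

namespace Schmidt

/-- A closed interval, given by its two endpoints. -/
abbrev Ivl := ℝ × ℝ

/-- The diameter (length) of an interval. -/
def diam (I : Ivl) : ℝ := I.2 - I.1

/-- The set of points of an interval. -/
def toSet (I : Ivl) : Set ℝ := Set.Icc I.1 I.2

/-- `Sub I J` means the interval `I` is contained in the interval `J`. -/
def Sub (I J : Ivl) : Prop := toSet I ⊆ toSet J

/-- A strategy: a function producing a move from the finite sequence of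
the opponent's moves so far. -/
abbrev Strategy := List Ivl → Ivl

/-- The list of Bob's moves `B 0, …, B n`. -/
def hist (B : ℕ → Ivl) (n : ℕ) : List Ivl := List.ofFn (fun i : Fin (n + 1) => B i)

/-- Bob's sequence of moves `B` is a legal play against Alice's strategy `σ`
in the `(α,β)`-game: `B 0` has positive diameter and each `B (n+1)` is a
subinterval of Alice's previous move `σ (hist B n)` of `β` times its diameter. -/
def BobPlays (β : ℝ) (σ : Strategy) (B : ℕ → Ivl) : Prop :=
  0 < diam (B 0) ∧
  ∀ n, Sub (B (n + 1)) (σ (hist B n)) ∧ diam (B (n + 1)) = β * diam (σ (hist B n))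

/-- `σ` is a legal strategy for Alice in the `(α,β)`-game: whenever Bob's
moves so far are legal, Alice's response is a subinterval of Bob's last move
of `α` times its diameter. -/
def AliceLegal (α β : ℝ) (σ : Strategy) : Prop :=
  ∀ B : ℕ → Ivl, ∀ n : ℕ, 0 < diam (B 0) →
    (∀ m, m < n → Sub (B (m + 1)) (σ (hist B m)) ∧
      diam (B (m + 1)) = β * diam (σ (hist B m))) →
    Sub (σ (hist B n)) (B n) ∧ diam (σ (hist B n)) = α * diam (B n)

/-- `σ` is a winning strategy for Alice in Schmidt's `(α,β)`-game with target `T`: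
it is legal, and in every run against it every point of the intersection of
Alice's moves lies in `T`. -/
def AliceWinsWith (α β : ℝ) (T : Set ℝ) (σ : Strategy) : Prop :=
  AliceLegal α β σ ∧
  ∀ B : ℕ → Ivl, BobPlays β σ B →
    ∀ x : ℝ, (∀ n, x ∈ toSet (σ (hist B n))) → x ∈ T

/-- `T` is `(α,β)`-winning: Alice has a winning strategy. -/
def Winning (α β : ℝ) (T : Set ℝ) : Prop := ∃ σ, AliceWinsWith α β T σ

/-- The list of Alice's moves `A 0, …, A (n-1)`. -/
def histA (A : ℕ → Ivl) (n : ℕ) : List Ivl := List.ofFn (fun i : Fin n => A i)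

/-- Alice's sequence of moves `A` is a legal play against Bob's strategy `τ`. -/
def AlicePlays (α : ℝ) (τ : Strategy) (A : ℕ → Ivl) : Prop :=
  ∀ n, Sub (A n) (τ (histA A n)) ∧ diam (A n) = α * diam (τ (histA A n))

/-- `τ` is a legal strategy for Bob in the `(α,β)`-game. -/
def BobLegal (α β : ℝ) (τ : Strategy) : Prop :=
  0 < diam (τ []) ∧
  ∀ A : ℕ → Ivl, ∀ n : ℕ,
    (∀ m, m ≤ n → Sub (A m) (τ (histA A m)) ∧
      diam (A m) = α * diam (τ (histA A m))) →
    Sub (τ (histA A (n + 1))) (A n) ∧ diam (τ (histA A (n + 1))) = β * diam (A n)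

/-- `τ` is a winning strategy for Bob in Schmidt's `(α,β)`-game with target `T`. -/
def BobWinsWith (α β : ℝ) (T : Set ℝ) (τ : Strategy) : Prop :=
  BobLegal α β τ ∧
  ∀ A : ℕ → Ivl, AlicePlays α τ A →
    ∀ x : ℝ, (∀ n, x ∈ toSet (A n)) → x ∉ T

/-- Bob has a winning strategy in the `(α,β)`-game with target `T`. -/
def BobWinning (α β : ℝ) (T : Set ℝ) : Prop := ∃ τ, BobWinsWith α β T τ

/-- `V` is a Vitali set: it contains exactly one representative of each
coset of `ℚ` in `ℝ`. -/
def IsVitali (V : Set ℝ) : Prop :=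
  ∀ x : ℝ, ∃! v : ℝ, v ∈ V ∧ ∃ q : ℚ, x - v = (q : ℝ)

/-- `P` is a partial Vitali set: it contains at most one representative of
each coset of `ℚ` in `ℝ`. -/
def IsPartialVitali (P : Set ℝ) : Prop :=
  ∀ x ∈ P, ∀ y ∈ P, (∃ q : ℚ, x - y = (q : ℝ)) → x = y

/-- `T` is `(α,β,I)`-winning: Alice has a winning strategy in Schmidt's
`(α,β)`-game with target `T` when Bob's first move is required to be `I`. -/
def WinningFrom (α β : ℝ) (T : Set ℝ) (I : Ivl) : Prop :=
  ∃ σ : Strategy,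
    (∀ B : ℕ → Ivl, B 0 = I → ∀ n : ℕ,
      (∀ m, m < n → Sub (B (m + 1)) (σ (hist B m)) ∧
        diam (B (m + 1)) = β * diam (σ (hist B m))) →
      Sub (σ (hist B n)) (B n) ∧ diam (σ (hist B n)) = α * diam (B n)) ∧
    (∀ B : ℕ → Ivl, B 0 = I → BobPlays β σ B →
      ∀ x : ℝ, (∀ n, x ∈ toSet (σ (hist B n))) → x ∈ T)


/-- `S` is a Sierpinski set: its intersection with every Lebesgue-null set is
countable. -/
def IsSierpinski (S : Set ℝ) : Prop :=
  ∀ A : Set ℝ, MeasureTheory.volume A = 0 → (S ∩ A).Countable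

namespace S16

open Set MeasureTheory
open scoped ENNReal

variable (α β : ℝ) (k : ℕ)

noncomputable def CC : ℝ := (α*β)^k
noncomputable def p0 : ℝ := α*(1-β)*(α*β)^(k-1)/2
noncomputable def sp (i : ℕ) : ℝ := p0 α β k * (CC α β k)^(i-1)
noncomputable def len (i : ℕ) : ℝ := (CC α β k)^i

def G (i : ℕ) : Set ℝ :=
  ⋃ m : ℤ, Set.Icc ((m:ℝ) * sp α β k i) ((m:ℝ) * sp α β k i + len α β k i)

def P : Set ℝ := Set.Icc 0 1 ∩ ⋂ i : ℕ, G α β k (i+1)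

noncomputable def childL (a : Ivl) (i : ℕ) : Ivl :=
  ((⌈a.1 / sp α β k i⌉ : ℝ) * sp α β k i,
   (⌈a.1 / sp α β k i⌉ : ℝ) * sp α β k i + len α β k i)

noncomputable def childR (a : Ivl) (i : ℕ) : Ivl :=
  (((⌈a.1 / sp α β k i⌉ : ℝ) + 1) * sp α β k i,
   ((⌈a.1 / sp α β k i⌉ : ℝ) + 1) * sp α β k i + len α β k i)

noncomputable def step (f : ℕ → ℝ) (a : Ivl) (n : ℕ) : Ivl :=
  if (n+1) % k = 0 then
    (if (childL α β k a ((n+1)/k)).1 ≤ f ((n+1)/k - 1) ∧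
        f ((n+1)/k - 1) ≤ (childL α β k a ((n+1)/k)).2
     then childR α β k a ((n+1)/k) else childL α β k a ((n+1)/k))
  else (a.1, a.1 + β*(a.2-a.1))

noncomputable def tau (f : ℕ → ℝ) : Strategy := fun l =>
  if l = [] then ((0:ℝ), (1:ℝ))
  else step α β k f (l.getLastD (0,1)) (l.length - 1)

variable {α β k}

lemma hab0 (hα0 : 0 < α) (hβ0 : 0 < β) : 0 < α*β := mul_pos hα0 hβ0

lemma hab1 (hα0 : 0 < α) (hα1 : α < 1) (hβ0 : 0 < β) (hβ13 : β < 1/3) :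
    α*β < 1 := by nlinarith

lemma p0_pos (hα0 : 0 < α) (hβ0 : 0 < β) (hβ13 : β < 1/3) : 0 < p0 α β k :=
  div_pos (mul_pos (mul_pos hα0 (by linarith)) (pow_pos (hab0 hα0 hβ0) _)) two_pos

lemma CC_pos (hα0 : 0 < α) (hβ0 : 0 < β) : 0 < CC α β k := pow_pos (hab0 hα0 hβ0) _

lemma sp_pos (hα0 : 0 < α) (hβ0 : 0 < β) (hβ13 : β < 1/3) (i : ℕ) : 0 < sp α β k i :=
  mul_pos (p0_pos hα0 hβ0 hβ13) (pow_pos (CC_pos hα0 hβ0) _)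

lemma len_pos (hα0 : 0 < α) (hβ0 : 0 < β) (i : ℕ) : 0 < len α β k i :=
  pow_pos (CC_pos hα0 hβ0) _

lemma sp_eq (hk : 1 ≤ k) {i : ℕ} (hi : 1 ≤ i) :
    sp α β k i = α*(1-β)/2 * (α*β)^(k*i-1) := by
  obtain ⟨j, rfl⟩ : ∃ j, i = j+1 := ⟨i-1, by omega⟩
  obtain ⟨k', rfl⟩ : ∃ k', k = k'+1 := ⟨k-1, by omega⟩
  have h2 : (k'+1)*(j+1) = k' + (k'+1)*j + 1 := by ring
  have h3 : (k'+1)*(j+1) - 1 = k' + (k'+1)*j := by rw [h2, Nat.add_sub_cancel]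
  simp only [sp, p0, CC, Nat.add_sub_cancel]
  rw [h3]
  conv_rhs => rw [pow_add, pow_mul]
  ring

lemma len_eq (hk : 1 ≤ k) {i : ℕ} (hi : 1 ≤ i) :
    len α β k i = (α*β) * (α*β)^(k*i-1) := by
  obtain ⟨j, rfl⟩ : ∃ j, i = j+1 := ⟨i-1, by omega⟩
  obtain ⟨k', rfl⟩ : ∃ k', k = k'+1 := ⟨k-1, by omega⟩
  obtain ⟨N, hN⟩ : ∃ N, (k'+1)*(j+1) = N+1 :=
    ⟨(k'+1)*(j+1)-1, by have : 0 < (k'+1)*(j+1) := Nat.mul_pos (by omega) (by omega); omega⟩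
  rw [len, CC, ← pow_mul, hN, Nat.add_sub_cancel, pow_succ]
  ring

lemma window_eq (hk : 1 ≤ k) {i : ℕ} (hi : 1 ≤ i) :
    2 * sp α β k i + len α β k i = α * (α*β)^(k*i-1) := by
  rw [sp_eq hk hi, len_eq hk hi]; ring

lemma len_beta (hk : 1 ≤ k) {i : ℕ} (hi : 1 ≤ i) :
    len α β k i = β * (α * (α*β)^(k*i-1)) := by
  rw [len_eq hk hi]; ring

lemma len_lt_sp (hα0 : 0 < α) (hβ0 : 0 < β) (hβ13 : β < 1/3) (hk : 1 ≤ k)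
    {i : ℕ} (hi : 1 ≤ i) : len α β k i < sp α β k i := by
  rw [sp_eq hk hi, len_eq hk hi]
  have hx : (0:ℝ) < (α*β)^(k*i-1) := pow_pos (hab0 hα0 hβ0) _
  nlinarith [mul_pos (mul_pos hα0 (show (0:ℝ) < 1-3*β by linarith)) hx]

lemma CC_eq (hβ13 : β < 1/3) (hk : 1 ≤ k) :
    CC α β k = 2*β/(1-β) * p0 α β k := by
  obtain ⟨k', rfl⟩ : ∃ k', k = k'+1 := ⟨k-1, by omega⟩
  have h1β : (1:ℝ) - β ≠ 0 := by intro h; nlinarith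
  rw [CC, p0, pow_succ]
  simp only [Nat.add_sub_cancel]
  field_simp


lemma child_bounds (hα0 : 0 < α) (hβ0 : 0 < β) (hβ13 : β < 1/3) (hk : 1 ≤ k)
    (a : Ivl) {i : ℕ} (hi : 1 ≤ i)
    (hd : diam a = α * (α*β)^(k*i-1)) :
    Sub (childL α β k a i) a ∧ Sub (childR α β k a i) a := by
  set p := sp α β k i with hp
  have hppos : 0 < p := sp_pos hα0 hβ0 hβ13 i
  set m : ℤ := ⌈a.1 / p⌉ with hm
  have h1 : a.1 ≤ (m:ℝ) * p := by
    have := Int.le_ceil (a.1 / p)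
    calc a.1 = (a.1 / p) * p := by field_simp
      _ ≤ (m:ℝ) * p := mul_le_mul_of_nonneg_right this hppos.le
  have h2 : (m:ℝ) * p < a.1 + p := by
    have := Int.ceil_lt_add_one (a.1 / p)
    calc (m:ℝ) * p < (a.1/p + 1) * p := by
          apply mul_lt_mul_of_pos_right this hppos
      _ = a.1 + p := by field_simp
  have ha2 : a.2 = a.1 + (2 * p + len α β k i) := by
    have hw := window_eq hk hi (α := α) (β := β)
    rw [← hp] at hw
    have hw2 : 2*p + len α β k i = a.2 - a.1 := by rw [hw, ← hd]; rfl
    linarith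
  have hlen : 0 < len α β k i := len_pos hα0 hβ0 i
  constructor
  · intro x hx
    rcases hx with ⟨hx1, hx2⟩
    constructor
    · exact le_trans h1 hx1
    · simp only [childL] at hx2
      rw [ha2]; nlinarith
  · intro x hx
    rcases hx with ⟨hx1, hx2⟩
    constructor
    · simp only [childR] at hx1
      nlinarith
    · simp only [childR] at hx2
      rw [ha2]; nlinarith

lemma child_diam (a : Ivl) (i : ℕ) :
    diam (childL α β k a i) = len α β k i ∧ diam (childR α β k a i) = len α β k i := by
  constructor <;> simp [diam, childL, childR]

lemma step_legal (hα0 : 0 < α) (hα1 : α < 1) (hβ0 : 0 < β) (hβ13 : β < 1/3) (hk : 1 ≤ k)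
    (f : ℕ → ℝ) (a : Ivl) (n : ℕ) (hd : diam a = α * (α*β)^n) :
    Sub (step α β k f a n) a ∧ diam (step α β k f a n) = β * diam a := by
  by_cases hb : (n+1) % k = 0
  · have hdvd : k ∣ (n+1) := Nat.dvd_of_mod_eq_zero hb
    have hki : k * ((n+1)/k) = n+1 := Nat.mul_div_cancel' hdvd
    set i := (n+1)/k with hidef
    have hi1 : 1 ≤ i := by
      rcases Nat.eq_zero_or_pos i with h|h
      · rw [h, Nat.mul_zero] at hki; omega
      · exact h
    have hn : n = k*i - 1 := by omega
    have hd' : diam a = α*(α*β)^(k*i-1) := by rw [hd, hn]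
    have hsub := child_bounds hα0 hβ0 hβ13 hk a hi1 hd'
    have hdm := child_diam (α := α) (β := β) (k := k) a i
    have hlb : diam (step α β k f a n) = len α β k i := by
      simp only [step, if_pos hb, ← hidef]
      split_ifs with hc
      · exact hdm.2
      · exact hdm.1
    refine ⟨?_, ?_⟩
    · simp only [step, if_pos hb, ← hidef]
      split_ifs with hc
      · exact hsub.2
      · exact hsub.1
    · rw [hlb, hd', len_beta hk hi1]
  · have hd0 : 0 ≤ a.2 - a.1 := by
      have : 0 < α*(α*β)^n := mul_pos hα0 (pow_pos (hab0 hα0 hβ0) n)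
      simp only [diam] at hd; linarith
    constructor
    · simp only [step, if_neg hb]
      intro x hx
      rcases hx with ⟨hx1, hx2⟩
      dsimp only at hx1 hx2
      exact ⟨hx1, by nlinarith⟩
    · simp only [step, if_neg hb, diam]; ring

lemma tau_nil (f : ℕ → ℝ) : tau α β k f [] = ((0:ℝ), (1:ℝ)) := by simp [tau]

lemma histA_succ (A : ℕ → Ivl) (n : ℕ) :
    histA A (n+1) = histA A n ++ [A n] := by
  rw [histA, histA, List.ofFn_succ', List.concat_eq_append]
  rfl

lemma histA_length (A : ℕ → Ivl) (n : ℕ) : (histA A n).length = n := by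
  simp [histA]

lemma tau_hist (f : ℕ → ℝ) (A : ℕ → Ivl) (n : ℕ) :
    tau α β k f (histA A (n+1)) = step α β k f (A n) n := by
  rw [histA_succ, tau]
  have hne : histA A n ++ [A n] ≠ [] := by simp
  rw [if_neg hne, List.getLastD_concat]
  congr 1
  rw [List.length_append, histA_length]
  simp

lemma bob_diam (hα0 : 0 < α) (hα1 : α < 1) (hβ0 : 0 < β) (hβ13 : β < 1/3) (hk : 1 ≤ k)
    (f : ℕ → ℝ) (A : ℕ → Ivl) (n : ℕ)
    (h : ∀ m, m < n → diam (A m) = α * diam (tau α β k f (histA A m))) :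
    diam (tau α β k f (histA A n)) = (α*β)^n := by
  induction n with
  | zero =>
    have : histA A 0 = [] := by simp [histA]
    rw [this, tau_nil]
    simp [diam]
  | succ n ih =>
    rw [tau_hist]
    have hd : diam (A n) = α * (α*β)^n := by
      rw [h n n.lt_succ_self, ih (fun m hm => h m (hm.trans n.lt_succ_self))]
    rw [(step_legal hα0 hα1 hβ0 hβ13 hk f (A n) n hd).2, hd, pow_succ]
    ring


lemma vol_aux (hα0 : 0 < α) (hβ0 : 0 < β) (hβ13 : β < 1/3) (hk : 1 ≤ k) :
    ∀ (J s : ℕ) (a : ℝ),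
      volume (Set.Icc a (a + (CC α β k)^s) ∩ ⋂ i : Fin J, G α β k (s+1+↑i)) ≤
        ENNReal.ofReal ((2*β/(1-β) + 3*CC α β k)^J * (CC α β k)^s) := by
  have hC : 0 < CC α β k := CC_pos hα0 hβ0
  have hp0 : 0 < p0 α β k := p0_pos hα0 hβ0 hβ13
  have h1β : (0:ℝ) < 1 - β := by linarith
  have hρ0 : (0:ℝ) ≤ 2*β/(1-β) := div_nonneg (by linarith) h1β.le
  have hρ1 : 2*β/(1-β) ≤ 1 := by rw [div_le_one h1β]; linarith
  have hr0 : (0:ℝ) ≤ 2*β/(1-β) + 3*CC α β k := by linarith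
  have hdiv : CC α β k / p0 α β k = 2*β/(1-β) := by
    rw [CC_eq hβ13 hk]; field_simp
  intro J
  induction J with
  | zero =>
    intro s a
    simp only [Set.iInter_of_empty, Set.inter_univ, Real.volume_Icc, pow_zero, one_mul]
    exact ENNReal.ofReal_le_ofReal (by linarith)
  | succ J ih =>
    intro s a
    have hsp : sp α β k (s+1) = p0 α β k * (CC α β k)^s := by simp [sp]
    have hppos : 0 < sp α β k (s+1) := sp_pos hα0 hβ0 hβ13 _
    set lo : ℤ := ⌈(a - (CC α β k)^(s+1))/sp α β k (s+1)⌉ with hlodef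
    set hi : ℤ := ⌊(a + (CC α β k)^s)/sp α β k (s+1)⌋ with hhidef
    have hcov : Set.Icc a (a + (CC α β k)^s) ∩ ⋂ i : Fin (J+1), G α β k (s+1+↑i) ⊆
        ⋃ m ∈ Finset.Icc lo hi,
          (Set.Icc ((m:ℝ)*sp α β k (s+1)) ((m:ℝ)*sp α β k (s+1) + (CC α β k)^(s+1)) ∩
            ⋂ i : Fin J, G α β k ((s+1)+1+↑i)) := by
      intro x hx
      obtain ⟨hx1, hx2⟩ := hx
      rw [Set.mem_iInter] at hx2
      have h0 := hx2 0
      have h0' : x ∈ G α β k (s+1) := by simpa using h0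
      rw [G, Set.mem_iUnion] at h0'
      obtain ⟨m, hm⟩ := h0'
      have hm1 : (m:ℝ)*sp α β k (s+1) ≤ x := hm.1
      have hm2 : x ≤ (m:ℝ)*sp α β k (s+1) + (CC α β k)^(s+1) := hm.2
      have hmem : m ∈ Finset.Icc lo hi := by
        rw [Finset.mem_Icc]
        constructor
        · apply Int.ceil_le.mpr
          rw [div_le_iff₀ hppos]
          have := hx1.1
          linarith
        · apply Int.le_floor.mpr
          rw [le_div_iff₀ hppos]
          have := hx1.2
          linarith
      refine Set.mem_biUnion hmem ⟨⟨hm1, hm2⟩, ?_⟩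
      rw [Set.mem_iInter]
      intro i
      have hxi := hx2 i.succ
      have he : s+1+((i.succ : Fin (J+1)) : ℕ) = (s+1)+1+(i:ℕ) := by
        rw [Fin.val_succ]; omega
      rwa [he] at hxi
    have hcard : ((Finset.Icc lo hi).card : ℝ) ≤ (1 + CC α β k)/p0 α β k + 2 := by
      have hRnn : (0:ℝ) ≤ (1 + CC α β k)/p0 α β k :=
        div_nonneg (by linarith) hp0.le
      rcases le_or_gt lo hi with hlh | hlh
      · have hc : (Finset.Icc lo hi).card = (hi + 1 - lo).toNat := Int.card_Icc lo hi
        have hnn : (0:ℤ) ≤ hi + 1 - lo := by omega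
        have hcR : ((Finset.Icc lo hi).card : ℝ) = (hi:ℝ) + 1 - (lo:ℝ) := by
          have h' : ((hi + 1 - lo).toNat : ℤ) = hi + 1 - lo := Int.toNat_of_nonneg hnn
          rw [hc]
          have h'' := congrArg (fun z : ℤ => (z : ℝ)) h'
          push_cast at h''
          linarith
        have hfl : (hi:ℝ) ≤ (a + (CC α β k)^s)/sp α β k (s+1) := Int.floor_le _
        have hcl : (a - (CC α β k)^(s+1))/sp α β k (s+1) ≤ (lo:ℝ) := Int.le_ceil _
        have hdd : (a + (CC α β k)^s)/sp α β k (s+1) - (a - (CC α β k)^(s+1))/sp α β k (s+1) =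
            (1 + CC α β k)/p0 α β k := by
          rw [hsp]
          have hCs : ((CC α β k)^s) ≠ 0 := (pow_pos hC s).ne'
          field_simp
          ring
        rw [hcR]
        linarith
      · have : Finset.Icc lo hi = ∅ := Finset.Icc_eq_empty (by omega)
        rw [this]
        simp
        linarith
    calc volume (Set.Icc a (a + (CC α β k)^s) ∩ ⋂ i : Fin (J+1), G α β k (s+1+↑i))
        ≤ volume (⋃ m ∈ Finset.Icc lo hi,
            (Set.Icc ((m:ℝ)*sp α β k (s+1)) ((m:ℝ)*sp α β k (s+1) + (CC α β k)^(s+1)) ∩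
              ⋂ i : Fin J, G α β k ((s+1)+1+↑i))) := measure_mono hcov
      _ ≤ ∑ m ∈ Finset.Icc lo hi,
            volume (Set.Icc ((m:ℝ)*sp α β k (s+1)) ((m:ℝ)*sp α β k (s+1) + (CC α β k)^(s+1)) ∩
              ⋂ i : Fin J, G α β k ((s+1)+1+↑i)) := measure_biUnion_finset_le _ _
      _ ≤ ∑ m ∈ Finset.Icc lo hi,
            ENNReal.ofReal ((2*β/(1-β) + 3*CC α β k)^J * (CC α β k)^(s+1)) :=
          Finset.sum_le_sum (fun m _ => ih (s+1) ((m:ℝ)*sp α β k (s+1)))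
      _ = ((Finset.Icc lo hi).card : ℝ≥0∞) *
            ENNReal.ofReal ((2*β/(1-β) + 3*CC α β k)^J * (CC α β k)^(s+1)) := by
          rw [Finset.sum_const, nsmul_eq_mul]
      _ ≤ ENNReal.ofReal ((2*β/(1-β) + 3*CC α β k)^(J+1) * (CC α β k)^s) := by
          rw [← ENNReal.ofReal_natCast ((Finset.Icc lo hi).card),
            ← ENNReal.ofReal_mul (by positivity)]
          apply ENNReal.ofReal_le_ofReal
          have hcc : ((Finset.Icc lo hi).card : ℝ) * CC α β k ≤
              2*β/(1-β) + 3*CC α β k := by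
            have e1 : ((1 + CC α β k)/p0 α β k + 2) * CC α β k =
                (1 + CC α β k) * (CC α β k / p0 α β k) + 2*CC α β k := by
              field_simp
            have e2 : ((Finset.Icc lo hi).card : ℝ) * CC α β k ≤
                ((1 + CC α β k)/p0 α β k + 2) * CC α β k :=
              mul_le_mul_of_nonneg_right hcard hC.le
            rw [e1, hdiv] at e2
            nlinarith [mul_le_mul_of_nonneg_left hρ1 hC.le]
          calc ((Finset.Icc lo hi).card : ℝ) *
                ((2*β/(1-β) + 3*CC α β k)^J * (CC α β k)^(s+1))
              = (((Finset.Icc lo hi).card : ℝ) * CC α β k) *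
                ((2*β/(1-β) + 3*CC α β k)^J * (CC α β k)^s) := by
                rw [pow_succ]; ring
            _ ≤ (2*β/(1-β) + 3*CC α β k) *
                ((2*β/(1-β) + 3*CC α β k)^J * (CC α β k)^s) := by
                apply mul_le_mul_of_nonneg_right hcc
                exact mul_nonneg (pow_nonneg hr0 J) (pow_nonneg hC.le s)
            _ = (2*β/(1-β) + 3*CC α β k)^(J+1) * (CC α β k)^s := by
                rw [pow_succ]; ring

lemma P_volume (hα0 : 0 < α) (hβ0 : 0 < β) (hβ13 : β < 1/3) (hk : 1 ≤ k)
    (hr : 2*β/(1-β) + 3*CC α β k < 1) : volume (P α β k) = 0 := by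
  have hC : 0 < CC α β k := CC_pos hα0 hβ0
  have h1β : (0:ℝ) < 1 - β := by linarith
  have hr0 : (0:ℝ) ≤ 2*β/(1-β) + 3*CC α β k := by
    have : (0:ℝ) ≤ 2*β/(1-β) := div_nonneg (by linarith) h1β.le
    linarith
  have key : ∀ J : ℕ, volume (P α β k) ≤
      ENNReal.ofReal ((2*β/(1-β) + 3*CC α β k)^J) := by
    intro J
    have hsub : P α β k ⊆
        Set.Icc (0:ℝ) (0 + (CC α β k)^0) ∩ ⋂ i : Fin J, G α β k (0+1+↑i) := by
      intro x hx
      obtain ⟨hx1, hx2⟩ := hx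
      rw [Set.mem_iInter] at hx2
      constructor
      · simpa using hx1
      · rw [Set.mem_iInter]; intro i
        have hxi := hx2 i
        have he : ((i:ℕ)+1) = 0+1+(i:ℕ) := by omega
        rwa [he] at hxi
    calc volume (P α β k)
        ≤ volume (Set.Icc (0:ℝ) (0 + (CC α β k)^0) ∩ ⋂ i : Fin J, G α β k (0+1+↑i)) :=
          measure_mono hsub
      _ ≤ ENNReal.ofReal ((2*β/(1-β) + 3*CC α β k)^J * (CC α β k)^0) :=
          vol_aux hα0 hβ0 hβ13 hk J 0 0
      _ = ENNReal.ofReal ((2*β/(1-β) + 3*CC α β k)^J) := by rw [pow_zero, mul_one]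
  have h0 : Filter.Tendsto
      (fun J : ℕ => ENNReal.ofReal ((2*β/(1-β) + 3*CC α β k)^J))
      Filter.atTop (nhds 0) := by
    rw [← ENNReal.ofReal_zero]
    exact ENNReal.tendsto_ofReal (tendsto_pow_atTop_nhds_zero_of_lt_one hr0 hr)
  exact le_antisymm (ge_of_tendsto' h0 key) zero_le


end S16

/-- for `0 < α < 1`, `0 < β < 1/3`, Bob has a winning strategy
in the `(α,β)`-game on any Sierpinski set. -/
theorem stmt16 (α β : ℝ) (hα0 : 0 < α) (hα1 : α < 1) (hβ0 : 0 < β)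
    (hβ13 : β < 1/3) (S : Set ℝ) (hS : IsSierpinski S) :
    BobWinning α β S := by
  classical
  have h1β : (0:ℝ) < 1 - β := by linarith
  have hab0 : 0 < α*β := mul_pos hα0 hβ0
  have hab1 : α*β < 1 := by nlinarith
  have hε : (0:ℝ) < (1 - 3*β)/(3*(1-β)) :=
    div_pos (by linarith) (by linarith)
  obtain ⟨k₀, hk₀⟩ := exists_pow_lt_of_lt_one hε hab1
  set k := max k₀ 1 with hkdef
  have hk1 : 1 ≤ k := le_max_right _ _
  have hCk : (α*β)^k ≤ (α*β)^k₀ :=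
    pow_le_pow_of_le_one hab0.le hab1.le (le_max_left _ _)
  have hClt : (α*β)^k < (1 - 3*β)/(3*(1-β)) := lt_of_le_of_lt hCk hk₀
  have hCC : S16.CC α β k = (α*β)^k := rfl
  have hr : 2*β/(1-β) + 3*S16.CC α β k < 1 := by
    rw [hCC]
    have h2 : (α*β)^k * (3*(1-β)) < 1 - 3*β :=
      (lt_div_iff₀ (by linarith)).mp hClt
    have e : 2*β/(1-β) + 3*(α*β)^k = (2*β + 3*(α*β)^k*(1-β))/(1-β) := by
      field_simp
    rw [e, div_lt_one h1β]
    linarith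
  -- measure zero and enumeration
  have hP0 : MeasureTheory.volume (S16.P α β k) = 0 :=
    S16.P_volume hα0 hβ0 hβ13 hk1 hr
  have hc : (insert (0:ℝ) (S ∩ S16.P α β k)).Countable := ((hS _ hP0).insert 0)
  obtain ⟨f, hf⟩ := hc.exists_eq_range (Set.insert_nonempty _ _)
  refine ⟨S16.tau α β k f, ⟨?_, ?_⟩, ?_⟩
  · -- positive first diameter
    have : S16.tau α β k f [] = ((0:ℝ), (1:ℝ)) := S16.tau_nil f
    rw [this]
    norm_num [diam]
  · -- legality
    intro A n h
    rw [S16.tau_hist]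
    have hdB : diam (S16.tau α β k f (histA A n)) = (α*β)^n :=
      S16.bob_diam hα0 hα1 hβ0 hβ13 hk1 f A n (fun m hm => (h m hm.le).2)
    have hdA : diam (A n) = α * (α*β)^n := by rw [(h n le_rfl).2, hdB]
    exact S16.step_legal hα0 hα1 hβ0 hβ13 hk1 f (A n) n hdA
  · -- winning
    intro A hA x hx hxS
    have hdB : ∀ n, diam (S16.tau α β k f (histA A n)) = (α*β)^n :=
      fun n => S16.bob_diam hα0 hα1 hβ0 hβ13 hk1 f A n (fun m _ => (hA m).2)
    have hxB : ∀ n, x ∈ toSet (S16.tau α β k f (histA A n)) :=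
      fun n => (hA n).1 (hx n)
    have hxI : x ∈ Set.Icc (0:ℝ) 1 := by
      have h0 := hxB 0
      have : histA A 0 = [] := by simp [histA]
      rw [this, S16.tau_nil] at h0
      exact h0
    -- at each branching round, x lies in the chosen child
    have hbranch : ∀ j : ℕ,
        x ∈ toSet (S16.step α β k f (A (k*(j+1) - 1)) (k*(j+1) - 1)) := by
      intro j
      have hpos : 0 < k*(j+1) := Nat.mul_pos (by omega) (by omega)
      have hn1 : k*(j+1) - 1 + 1 = k*(j+1) := by omega
      have hmem := hxB (k*(j+1))
      rw [← hn1, S16.tau_hist] at hmem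
      exact hmem
    have hstepfacts : ∀ j : ℕ,
        ((k*(j+1) - 1) + 1) % k = 0 ∧ ((k*(j+1) - 1) + 1)/k = j+1 := by
      intro j
      have hpos : 0 < k*(j+1) := Nat.mul_pos (by omega) (by omega)
      have hn1 : k*(j+1) - 1 + 1 = k*(j+1) := by omega
      rw [hn1]
      exact ⟨Nat.mul_mod_right k (j+1), Nat.mul_div_cancel_left _ (by omega)⟩
    have hxG : ∀ j : ℕ, x ∈ S16.G α β k (j+1) := by
      intro j
      have hmem := hbranch j
      obtain ⟨hb, hq⟩ := hstepfacts j
      rw [S16.step, if_pos hb, hq] at hmem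
      split_ifs at hmem
      · -- childR
        rw [S16.G, Set.mem_iUnion]
        refine ⟨⌈(A (k*(j+1)-1)).1 / S16.sp α β k (j+1)⌉ + 1, ?_⟩
        push_cast
        exact hmem
      · rw [S16.G, Set.mem_iUnion]
        exact ⟨⌈(A (k*(j+1)-1)).1 / S16.sp α β k (j+1)⌉, hmem⟩
    have hxP : x ∈ S16.P α β k := ⟨hxI, Set.mem_iInter.mpr hxG⟩
    have hxR : x ∈ Set.range f := by
      rw [← hf]
      exact Set.mem_insert_of_mem _ ⟨hxS, hxP⟩
    obtain ⟨j, hj⟩ := hxR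
    -- contradiction with diagonalization at round k*(j+1)
    have hmem := hbranch j
    obtain ⟨hb, hq⟩ := hstepfacts j
    rw [S16.step, if_pos hb, hq] at hmem
    have hlt : S16.len α β k (j+1) < S16.sp α β k (j+1) :=
      S16.len_lt_sp hα0 hβ0 hβ13 hk1 (by omega)
    have hsep : (0:ℝ) < S16.sp α β k (j+1) := S16.sp_pos hα0 hβ0 hβ13 _
    simp only [Nat.add_sub_cancel] at hmem
    split_ifs at hmem with hcond
    · -- Bob chose childR because f j is inside childL; but x = f j is in childR
      obtain ⟨hm1, hm2⟩ := hmem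
      simp only [S16.childR] at hm1 hm2
      simp only [S16.childL] at hcond
      rw [hj] at hcond
      obtain ⟨hc1, hc2⟩ := hcond
      nlinarith
    · obtain ⟨hm1, hm2⟩ := hmem
      simp only [S16.childL] at hm1 hm2 hcond
      rw [hj] at hcond
      exact hcond ⟨hm1, hm2⟩

end Schmidt
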